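/- Let p be an even positive integer and φ = ⟨m, e⟩ a p-precision float with e ≥ I^min_{p/2} and whose value is positive and at most the maximum p-precision representable value. Then the real value of f_p(g_p(φ)) differs from the real value of φ by a multiplicative factor of at most 1 ± 2^{−p/2 + 2}. -/

import Mathlib

/-- The maximum value of a signed `q`-bit integer: `I^max_q = 2^q − 1`. -/
def Imax (q : ℕ) : ℤ := 2 ^ q - 1

/-- The minimum value of a signed `q`-bit integer: `I^min_q = −(2^q − 1)`. -/
def Imin (q : ℕ) : ℤ := -(2 ^ q - 1)

/-- Bit-size of an integer: `sizeof(z) = ⌊log₂ |z|⌋ + 2` for `z ≠ 0`, and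
`sizeof(0) = 2`. -/
def sizeofInt (z : ℤ) : ℕ := if z = 0 then 2 else Nat.log 2 z.natAbs + 2

/-- Let `p` be even and positive and `φ = ⟨m, e⟩` a
`p`-precision float with `e ≥ I^min_{p/2}` whose value is positive and at
most `F^max_p = I^max_{p/2} · 2^{I^max_{p/2}}`. With `z = g_p(φ)`,
`ℓ = max{0, sizeof(z) − p/2}`, `m' = ⌊z / 2^ℓ⌋`, and
`e' = sizeof(z) − sizeof(m') + I^min_{p/2}`, assuming no overflow
(`e' ≤ I^max_{p/2}`), the value `m' · 2^{e'}` of `f_p(g_p(φ))` differs from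
the value `m · 2^e` of `φ` by a multiplicative factor of at most
`1 ± 2^{−p/2 + 2}`. -/
theorem truncated_roundtrip_close (p : ℕ) (hp : 0 < p) (hpe : Even p)
    (m e : ℤ) (hm : |m| ≤ Imax (p / 2)) (he : |e| ≤ Imax (p / 2))
    (heI : Imin (p / 2) ≤ e)
    (hpos : 0 < (m : ℝ) * (2 : ℝ) ^ e)
    (hmaxval : (m : ℝ) * (2 : ℝ) ^ e ≤
      ((Imax (p / 2) : ℝ)) * (2 : ℝ) ^ (Imax (p / 2)))
    (z : ℤ) (hz : z = m * 2 ^ (e - Imin (p / 2)).toNat)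
    (ℓ : ℕ) (hℓ : ℓ = sizeofInt z - p / 2)
    (m' : ℤ) (hm' : m' = z / 2 ^ ℓ)
    (e' : ℤ) (he' : e' = (sizeofInt z : ℤ) - (sizeofInt m' : ℤ) + Imin (p / 2))
    (hoverflow : e' ≤ Imax (p / 2)) :
    (m : ℝ) * (2 : ℝ) ^ e * (1 - (2 : ℝ) ^ ((2 : ℤ) - (p : ℤ) / 2)) ≤
      (m' : ℝ) * (2 : ℝ) ^ e' ∧
    (m' : ℝ) * (2 : ℝ) ^ e' ≤
      (m : ℝ) * (2 : ℝ) ^ e * (1 + (2 : ℝ) ^ ((2 : ℤ) - (p : ℤ) / 2)) := by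
  obtain ⟨r, hr⟩ := hpe
  set q : ℕ := p / 2 with hqdef
  have hqr : q = r := by omega
  have hq1 : 1 ≤ q := by omega
  -- rewrite exponent
  have hexp : ((2 : ℤ) - (p : ℤ) / 2) = (2 - (q : ℤ)) := by
    subst hr; push_cast; omega
  rw [hexp]
  set t : ℝ := (2 : ℝ) ^ ((2 : ℤ) - (q : ℤ)) with ht
  have ht0 : 0 < t := zpow_pos (by norm_num) _
  -- m > 0
  have h2e : (0 : ℝ) < (2 : ℝ) ^ e := zpow_pos (by norm_num) _
  have hmR : (0 : ℝ) < (m : ℝ) := by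
    by_contra h
    push_neg at h
    nlinarith
  have hm0 : 0 < m := by exact_mod_cast hmR
  have hz0 : 0 < z := by
    rw [hz]; positivity
  have hzne : z ≠ 0 := hz0.ne'
  -- the key real identity
  have hzval : (z : ℝ) * (2 : ℝ) ^ (Imin q) = (m : ℝ) * (2 : ℝ) ^ e := by
    have h1 : ((e - Imin q).toNat : ℤ) = e - Imin q := Int.toNat_of_nonneg (by omega)
    have : (z : ℝ) = (m : ℝ) * (2 : ℝ) ^ (e - Imin q) := by
      rw [hz]
      push_cast
      rw [← zpow_natCast (2 : ℝ) ((e - Imin q).toNat), h1]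
    rw [this, mul_assoc, ← zpow_add₀ (by norm_num : (2:ℝ) ≠ 0)]
    ring_nf
  set n : ℕ := z.natAbs with hn
  have hnz : (n : ℤ) = z := Int.natAbs_of_nonneg hz0.le
  have hn0 : n ≠ 0 := by omega
  set L : ℕ := Nat.log 2 n with hL
  have hszz : sizeofInt z = L + 2 := by simp [sizeofInt, hzne, hn, hL]
  have hnlb : 2 ^ L ≤ n := Nat.pow_log_le_self 2 hn0
  have hnub : n < 2 ^ (L + 1) := Nat.lt_pow_succ_log_self (by norm_num) n
  have hIminpos : (0:ℝ) < (2:ℝ) ^ (Imin q) := zpow_pos (by norm_num) _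
  rcases Nat.eq_zero_or_pos ℓ with hℓ0 | hℓpos
  · -- ℓ = 0 : exact roundtrip
    subst hℓ0
    have hm'z : m' = z := by simpa using hm'
    have he'v : e' = Imin q := by rw [he', hm'z]; ring
    rw [hm'z, he'v, hzval]
    constructor <;> nlinarith
  · -- ℓ > 0
    have hℓval : ℓ = L + 2 - q := by rw [hℓ, hszz]
    have hLq : q < L + 2 := by omega
    rcases eq_or_lt_of_le hq1 with hq1' | hq2
    · -- q = 1 : m' = 0
      have hq1'' : q = 1 := hq1'.symm
      have hℓL : ℓ = L + 1 := by omega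
      have hzlt : z < 2 ^ ℓ := by
        rw [hℓL, ← hnz]
        exact_mod_cast hnub
      have hm'0 : m' = 0 := by
        rw [hm']
        exact Int.ediv_eq_zero_of_lt hz0.le hzlt
      have ht2 : t = 2 := by rw [ht, hq1'']; norm_num
      rw [hm'0, ht2]
      simp only [Int.cast_zero, zero_mul]
      constructor <;> nlinarith
    · -- q ≥ 2 : main case
      have hℓL : ℓ ≤ L := by omega
      -- m' * 2^ℓ ≤ z < (m'+1) * 2^ℓ
      have hpow0 : (0:ℤ) < 2 ^ ℓ := by positivity
      have hub : z < (m' + 1) * 2 ^ ℓ := by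
        rw [hm']; exact Int.lt_ediv_add_one_mul_self z hpow0
      have hlb : m' * 2 ^ ℓ ≤ z := by
        rw [hm']; exact Int.ediv_mul_le z hpow0.ne'
      -- m' positive
      have hm'pos : 0 < m' := by
        rw [hm']
        rw [Int.lt_iff_add_one_le, Int.le_ediv_iff_mul_le hpow0]
        have : (2:ℤ) ^ ℓ ≤ 2 ^ L := by
          apply pow_le_pow_right₀ (by norm_num) hℓL
        calc (0 + 1) * 2 ^ ℓ = 2 ^ ℓ := by ring
          _ ≤ 2 ^ L := this
          _ ≤ (n : ℤ) := by exact_mod_cast hnlb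
          _ = z := hnz
      -- sizeof m'
      have hm'nat : m'.natAbs = n / 2 ^ ℓ := by
        have h1 : m' = ((n / 2 ^ ℓ : ℕ) : ℤ) := by
          rw [hm', ← hnz, Int.natCast_ediv]; push_cast; ring
        rw [h1, Int.natAbs_natCast]
      have hlogm' : Nat.log 2 m'.natAbs = L - ℓ := by
        rw [hm'nat]
        apply Nat.log_eq_of_pow_le_of_lt_pow
        · rw [Nat.le_div_iff_mul_le (by positivity : 0 < 2 ^ ℓ)]
          rw [← pow_add]
          rwa [Nat.sub_add_cancel hℓL]
        · rw [Nat.div_lt_iff_lt_mul (by positivity : 0 < 2 ^ ℓ)]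
          rw [← pow_add]
          have : L - ℓ + 1 + ℓ = L + 1 := by omega
          rwa [this]
      have hszm' : sizeofInt m' = (L - ℓ) + 2 := by
        simp [sizeofInt, hm'pos.ne', hlogm']
      -- e' = ℓ + Imin q
      have he'v : e' = (ℓ : ℤ) + Imin q := by
        rw [he', hszz, hszm']
        have : ((L - ℓ : ℕ) : ℤ) = (L : ℤ) - ℓ := by
          push_cast [Nat.cast_sub hℓL]; ring
        push_cast [this]; ring
      -- real inequalities
      have hMle : ((m' : ℝ) * 2 ^ ℓ) ≤ (z : ℝ) := by exact_mod_cast hlb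
      have hMgt : (z : ℝ) < (m' : ℝ) * 2 ^ ℓ + 2 ^ ℓ := by
        have hub' : z < m' * 2 ^ ℓ + 2 ^ ℓ := by rw [add_mul, one_mul] at hub; exact hub
        exact_mod_cast hub'
      have hpowle : ((2 : ℝ) ^ ℓ) ≤ (z : ℝ) * t := by
        have h1 : ((2:ℝ) ^ ℓ) = (2:ℝ) ^ (L : ℤ) * t := by
          rw [ht, ← zpow_natCast (2:ℝ) ℓ, ← zpow_add₀ (by norm_num : (2:ℝ) ≠ 0)]
          congr 1
          have : (ℓ : ℤ) = (L : ℤ) + 2 - q := by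
            rw [hℓval]; push_cast [Nat.cast_sub hLq.le]; ring
          omega
        have h2 : (2:ℝ) ^ (L : ℤ) ≤ (z : ℝ) := by
          rw [zpow_natCast]
          have : ((2 ^ L : ℕ) : ℝ) ≤ ((n : ℕ) : ℝ) := by exact_mod_cast hnlb
          push_cast at this
          rw [← hnz]; push_cast; linarith
        rw [h1]
        exact mul_le_mul_of_nonneg_right h2 ht0.le
      -- value of m' * 2^e'
      have hval : (m' : ℝ) * (2:ℝ) ^ e' = ((m' : ℝ) * 2 ^ ℓ) * (2:ℝ) ^ (Imin q) := by
        rw [he'v, zpow_add₀ (by norm_num : (2:ℝ) ≠ 0), zpow_natCast]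
        ring
      rw [hval, ← hzval]
      have hzR : (0:ℝ) < (z : ℝ) := by exact_mod_cast hz0
      have hzt : 0 ≤ (z : ℝ) * t := mul_nonneg hzR.le ht0.le
      constructor
      · have hlow : (z : ℝ) * (1 - t) ≤ (m' : ℝ) * 2 ^ ℓ := by
          have h3 : (z : ℝ) * (1 - t) = (z : ℝ) - (z : ℝ) * t := by ring
          rw [h3]; linarith
        calc (z : ℝ) * 2 ^ Imin q * (1 - t) = ((z : ℝ) * (1 - t)) * 2 ^ Imin q := by ring
          _ ≤ ((m' : ℝ) * 2 ^ ℓ) * 2 ^ Imin q :=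
            mul_le_mul_of_nonneg_right hlow hIminpos.le
      · have hhigh : (m' : ℝ) * 2 ^ ℓ ≤ (z : ℝ) * (1 + t) := by
          have h3 : (z : ℝ) * (1 + t) = (z : ℝ) + (z : ℝ) * t := by ring
          rw [h3]; linarith
        calc ((m' : ℝ) * 2 ^ ℓ) * 2 ^ Imin q ≤ ((z : ℝ) * (1 + t)) * 2 ^ Imin q :=
            mul_le_mul_of_nonneg_right hhigh hIminpos.le
          _ = (z : ℝ) * 2 ^ Imin q * (1 + t) := by ring
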